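/- Let k ≥ 1, K : {-k,…,k}² → ℝ a (2k+1)×(2k+1) kernel, and d > k. With periodic padding, there exist 3×3 kernels P_{(i₁,j₁),…,(i_{k-1},j_{k-1})} and shift kernels S_{i,j} (i,j ∈ {-1,0,1}) such that for all X ∈ ℝ^{d×d}, K ∗ X = Σ over all (i₁,j₁),…,(i_{k-1},j_{k-1}) ∈ {-1,0,1}² of P_{(i₁,j₁),…,(i_{k-1},j_{k-1})} ∗ S_{i_{k-1},j_{k-1}} ∗ ⋯ ∗ S_{i₁,j₁} ∗ X. -/

import Mathlib

open Finset


/-- Periodic 2D convolution on `(ℤ/dℤ)²`-indexed data with a kernel of radius `k`: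
`(K ∗ X)_{m,n} = Σ_{s,t=-k}^{k} K_{s,t} X_{m+s, n+t}`, indices mod `d`. -/
noncomputable def pconv {d : ℕ} (k : ℤ) (K : ℤ → ℤ → ℝ) (X : ZMod d → ZMod d → ℝ) :
    ZMod d → ZMod d → ℝ :=
  fun m n => ∑ s ∈ Finset.Icc (-k) k, ∑ t ∈ Finset.Icc (-k) k,
    K s t * X (m + (s : ZMod d)) (n + (t : ZMod d))

/-- The 3×3 shift kernel supported at `(i,j)` with value 1. -/
noncomputable def shiftKer (i j : ℤ) : ℤ → ℤ → ℝ :=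
  fun s t => if s = i ∧ t = j then 1 else 0

/-- Apply a list of shift-kernel convolutions successively, first list element applied
first (innermost). -/
noncomputable def applyShifts {d : ℕ} (l : List (ℤ × ℤ)) (X : ZMod d → ZMod d → ℝ) :
    ZMod d → ZMod d → ℝ :=
  l.foldl (fun Y ij => pconv 1 (shiftKer ij.1 ij.2) Y) X

/-- canonical unit step towards `a` at stage `i` -/
def Dstep (a : ℤ) (i : ℕ) : ℤ := if (i:ℤ) < a then 1 else if (i:ℤ) < -a then -1 else 0

lemma Dstep_mem (a : ℤ) (i : ℕ) : Dstep a i ∈ Finset.Icc (-1:ℤ) 1 := by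
  unfold Dstep; split_ifs <;> simp

lemma sumD (k : ℕ) (a : ℤ) : ∑ i ∈ Finset.range k, Dstep a i = max (-(k:ℤ)) (min (k:ℤ) a) := by
  induction k with
  | zero => simp
  | succ k ih =>
    rw [Finset.sum_range_succ, ih]
    unfold Dstep
    push_cast
    split_ifs <;>
      simp only [max_def, min_def] at * <;> split_ifs at * <;> omega

lemma key2 (k' : ℕ) (a : ℤ) : (∑ ℓ : Fin k', Dstep a ℓ) + Dstep a k'
    = max (-(k':ℤ)-1) (min ((k':ℤ)+1) a) := by
  have h := sumD (k'+1) a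
  rw [Finset.sum_range_succ] at h
  rw [Fin.sum_univ_eq_sum_range (fun i => Dstep a i) k', h]
  push_cast
  ring_nf

lemma key_eq (k' : ℕ) (a : ℤ) (h1 : -((k':ℤ)+1) ≤ a) (h2 : a ≤ (k':ℤ)+1) :
    Dstep a k' + ∑ ℓ : Fin k', Dstep a ℓ = a := by
  have h := key2 k' a
  rw [add_comm]
  rw [h]
  simp only [max_def, min_def]
  split_ifs <;> omega

lemma key_bound (k' : ℕ) (a : ℤ) (h : (∑ ℓ : Fin k', Dstep a ℓ) + Dstep a k' = a) :
    -((k':ℤ)+1) ≤ a ∧ a ≤ (k':ℤ)+1 := by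
  rw [key2 k' a] at h
  simp only [max_def, min_def] at h
  split_ifs at h <;> omega

/-- the canonicity condition -/
def PCond (k' : ℕ) (c : Fin k' → ℤ × ℤ) (s t : ℤ) : Prop :=
  (∀ ℓ : Fin k', c ℓ = (Dstep (s + ∑ i, (c i).1) ℓ, Dstep (t + ∑ i, (c i).2) ℓ)) ∧
    s = Dstep (s + ∑ i, (c i).1) k' ∧ t = Dstep (t + ∑ i, (c i).2) k'

open scoped Classical in
/-- the decomposed 3×3 kernels -/
noncomputable def Pker (k' : ℕ) (K : ℤ → ℤ → ℝ) (c : Fin k' → ℤ × ℤ) (s t : ℤ) : ℝ :=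
  if PCond k' c s t then K (s + ∑ i, (c i).1) (t + ∑ i, (c i).2) else 0

lemma Pker_supp (k' : ℕ) (K : ℤ → ℤ → ℝ) (c : Fin k' → ℤ × ℤ) (s t : ℤ)
    (h : (1:ℤ) < |s| ∨ (1:ℤ) < |t|) : Pker k' K c s t = 0 := by
  unfold Pker
  split_ifs with hc
  · exfalso
    have h1 := Dstep_mem (s + ∑ i, (c i).1) k'
    have h2 := Dstep_mem (t + ∑ i, (c i).2) k'
    simp only [Finset.mem_Icc] at h1 h2
    rcases hc with ⟨-, hs, ht⟩
    rcases h with h | h <;> rw [lt_abs] at h <;> omega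
  · rfl

lemma pconv_shift {d : ℕ} (i j : ℤ) (hi : i ∈ Finset.Icc (-1:ℤ) 1) (hj : j ∈ Finset.Icc (-1:ℤ) 1)
    (X : ZMod d → ZMod d → ℝ) (m n : ZMod d) :
    pconv 1 (shiftKer i j) X m n = X (m + (i : ZMod d)) (n + (j : ZMod d)) := by
  unfold pconv shiftKer
  rw [Finset.sum_eq_single_of_mem i hi, Finset.sum_eq_single_of_mem j hj]
  · simp
  · intro t ht hne; simp [hne]
  · intro s hs hne
    apply Finset.sum_eq_zero
    intro t ht; simp [hne]

lemma applyShifts_eq {d : ℕ} (l : List (ℤ × ℤ))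
    (hl : ∀ p ∈ l, p.1 ∈ Finset.Icc (-1:ℤ) 1 ∧ p.2 ∈ Finset.Icc (-1:ℤ) 1)
    (X : ZMod d → ZMod d → ℝ) (m n : ZMod d) :
    applyShifts l X m n
      = X (m + (((l.map Prod.fst).sum : ℤ) : ZMod d)) (n + (((l.map Prod.snd).sum : ℤ) : ZMod d)) := by
  induction l generalizing X m n with
  | nil => simp [applyShifts]
  | cons p l ih =>
    have hstep : applyShifts (p :: l) X = applyShifts l (pconv 1 (shiftKer p.1 p.2) X) := rfl
    rw [hstep, ih (fun q hq => hl q (List.mem_cons_of_mem p hq)),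
      pconv_shift p.1 p.2 (hl p List.mem_cons_self).1 (hl p List.mem_cons_self).2]
    simp only [List.map_cons, List.sum_cons]
    push_cast
    ring_nf

open scoped Classical in
lemma Pker_main {d k' : ℕ} (K : ℤ → ℤ → ℝ) (X : ZMod d → ZMod d → ℝ) (m n : ZMod d) :
    pconv (((k'+1 : ℕ) : ℤ)) K X m n =
      ∑ c ∈ Fintype.piFinset
          (fun _ : Fin k' => (Finset.Icc (-1 : ℤ) 1) ×ˢ (Finset.Icc (-1 : ℤ) 1)),
        pconv 1 (Pker k' K c) (applyShifts (List.ofFn c) X) m n := by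
  have lhs_eq : pconv (((k'+1 : ℕ) : ℤ)) K X m n
      = ∑ p ∈ (Finset.Icc (-((k'+1 : ℕ):ℤ)) ((k'+1 : ℕ):ℤ)) ×ˢ (Finset.Icc (-((k'+1 : ℕ):ℤ)) ((k'+1 : ℕ):ℤ)),
          K p.1 p.2 * X (m + (p.1 : ZMod d)) (n + (p.2 : ZMod d)) :=
    (Finset.sum_product' (s := Finset.Icc (-((k'+1 : ℕ):ℤ)) ((k'+1 : ℕ):ℤ))
      (t := Finset.Icc (-((k'+1 : ℕ):ℤ)) ((k'+1 : ℕ):ℤ))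
      (f := fun a b => K a b * X (m + (a : ZMod d)) (n + (b : ZMod d)))).symm
  have rhs1 : ∀ c ∈ Fintype.piFinset
      (fun _ : Fin k' => (Finset.Icc (-1 : ℤ) 1) ×ˢ (Finset.Icc (-1 : ℤ) 1)),
      pconv 1 (Pker k' K c) (applyShifts (List.ofFn c) X) m n
        = ∑ p ∈ (Finset.Icc (-1:ℤ) 1) ×ˢ (Finset.Icc (-1:ℤ) 1),
            Pker k' K c p.1 p.2 *
              X (m + (p.1 : ZMod d) + (((∑ i, (c i).1 : ℤ)) : ZMod d))
                (n + (p.2 : ZMod d) + (((∑ i, (c i).2 : ℤ)) : ZMod d)) := by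
    intro c hc
    have hmem : ∀ q ∈ List.ofFn c, q.1 ∈ Finset.Icc (-1:ℤ) 1 ∧ q.2 ∈ Finset.Icc (-1:ℤ) 1 := by
      intro q hq
      obtain ⟨ℓ, rfl⟩ := List.mem_ofFn.mp hq
      exact Finset.mem_product.mp (Fintype.mem_piFinset.mp hc ℓ)
    have hsum1 : ((List.ofFn c).map Prod.fst).sum = ∑ i, (c i).1 := by
      simp [List.map_ofFn, List.sum_ofFn, Function.comp]
    have hsum2 : ((List.ofFn c).map Prod.snd).sum = ∑ i, (c i).2 := by
      simp [List.map_ofFn, List.sum_ofFn, Function.comp]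
    calc pconv 1 (Pker k' K c) (applyShifts (List.ofFn c) X) m n
        = ∑ p ∈ (Finset.Icc (-1:ℤ) 1) ×ˢ (Finset.Icc (-1:ℤ) 1),
            Pker k' K c p.1 p.2 *
              (applyShifts (List.ofFn c) X) (m + (p.1 : ZMod d)) (n + (p.2 : ZMod d)) :=
          (Finset.sum_product' (s := Finset.Icc (-1:ℤ) 1) (t := Finset.Icc (-1:ℤ) 1)
            (f := fun a b => Pker k' K c a b *
            (applyShifts (List.ofFn c) X) (m + (a : ZMod d)) (n + (b : ZMod d)))).symm
      _ = _ := by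
          apply Finset.sum_congr rfl
          intro p hp
          rw [applyShifts_eq _ hmem, hsum1, hsum2]
  rw [lhs_eq, Finset.sum_congr rfl rhs1, ← Finset.sum_product']
  rw [← Finset.sum_filter_of_ne
    (p := fun u : (Fin k' → ℤ × ℤ) × ℤ × ℤ => PCond k' u.1 u.2.1 u.2.2)
    (fun u hu hne => by
      by_contra hcond
      exact hne (by rw [Pker, if_neg hcond, zero_mul]))]
  apply Finset.sum_nbij'
    (i := fun p : ℤ × ℤ => ((fun ℓ : Fin k' => (Dstep p.1 ℓ, Dstep p.2 ℓ)),
        (Dstep p.1 k', Dstep p.2 k')))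
    (j := fun u : (Fin k' → ℤ × ℤ) × ℤ × ℤ =>
        (u.2.1 + ∑ i, (u.1 i).1, u.2.2 + ∑ i, (u.1 i).2))
  · -- hi : maps into filtered set
    intro p hp
    rw [Finset.mem_product, Finset.mem_Icc, Finset.mem_Icc] at hp
    have hAa : Dstep p.1 k' + ∑ ℓ : Fin k', Dstep p.1 ℓ = p.1 :=
      key_eq k' p.1 (by push_cast at hp ⊢; omega) (by push_cast at hp ⊢; omega)
    have hBb : Dstep p.2 k' + ∑ ℓ : Fin k', Dstep p.2 ℓ = p.2 :=
      key_eq k' p.2 (by push_cast at hp ⊢; omega) (by push_cast at hp ⊢; omega)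
    rw [Finset.mem_filter]
    refine ⟨?_, ?_⟩
    · rw [Finset.mem_product]
      constructor
      · rw [Fintype.mem_piFinset]
        intro ℓ
        exact Finset.mem_product.mpr ⟨Dstep_mem _ _, Dstep_mem _ _⟩
      · exact Finset.mem_product.mpr ⟨Dstep_mem _ _, Dstep_mem _ _⟩
    · unfold PCond
      simp only
      rw [hAa, hBb]
      exact ⟨fun ℓ => rfl, rfl, rfl⟩
  · -- hj : maps back
    intro u hu
    rw [Finset.mem_filter] at hu
    obtain ⟨-, hcond⟩ := hu
    obtain ⟨hcℓ, hs, ht⟩ := hcond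
    have h1 : (∑ ℓ : Fin k', Dstep (u.2.1 + ∑ i, (u.1 i).1) ℓ) + Dstep (u.2.1 + ∑ i, (u.1 i).1) k'
        = u.2.1 + ∑ i, (u.1 i).1 := by
      conv_rhs => rw [hs]
      rw [add_comm]
      congr 1
      apply Finset.sum_congr rfl
      intro ℓ _
      conv_rhs => rw [congrArg Prod.fst (hcℓ ℓ)]
    have h2 : (∑ ℓ : Fin k', Dstep (u.2.2 + ∑ i, (u.1 i).2) ℓ) + Dstep (u.2.2 + ∑ i, (u.1 i).2) k'
        = u.2.2 + ∑ i, (u.1 i).2 := by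
      conv_rhs => rw [ht]
      rw [add_comm]
      congr 1
      apply Finset.sum_congr rfl
      intro ℓ _
      conv_rhs => rw [congrArg Prod.snd (hcℓ ℓ)]
    have b1 := key_bound k' _ h1
    have b2 := key_bound k' _ h2
    rw [Finset.mem_product, Finset.mem_Icc, Finset.mem_Icc]
    push_cast
    omega
  · -- left_inv : j (i p) = p
    intro p hp
    rw [Finset.mem_product, Finset.mem_Icc, Finset.mem_Icc] at hp
    have hAa : Dstep p.1 k' + ∑ ℓ : Fin k', Dstep p.1 ℓ = p.1 :=
      key_eq k' p.1 (by push_cast at hp ⊢; omega) (by push_cast at hp ⊢; omega)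
    have hBb : Dstep p.2 k' + ∑ ℓ : Fin k', Dstep p.2 ℓ = p.2 :=
      key_eq k' p.2 (by push_cast at hp ⊢; omega) (by push_cast at hp ⊢; omega)
    simp only
    rw [Prod.ext_iff]
    exact ⟨hAa, hBb⟩
  · -- right_inv : i (j u) = u
    intro u hu
    rw [Finset.mem_filter] at hu
    obtain ⟨-, hcond⟩ := hu
    obtain ⟨hcℓ, hs, ht⟩ := hcond
    simp only
    rw [Prod.ext_iff, Prod.ext_iff]
    refine ⟨funext fun ℓ => ?_, hs.symm, ht.symm⟩
    exact (hcℓ ℓ).symm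
  · -- value equality
    intro p hp
    rw [Finset.mem_product, Finset.mem_Icc, Finset.mem_Icc] at hp
    have hAa : Dstep p.1 k' + ∑ ℓ : Fin k', Dstep p.1 ℓ = p.1 :=
      key_eq k' p.1 (by push_cast at hp ⊢; omega) (by push_cast at hp ⊢; omega)
    have hBb : Dstep p.2 k' + ∑ ℓ : Fin k', Dstep p.2 ℓ = p.2 :=
      key_eq k' p.2 (by push_cast at hp ⊢; omega) (by push_cast at hp ⊢; omega)
    simp only
    have hcond : PCond k' (fun ℓ : Fin k' => (Dstep p.1 ℓ, Dstep p.2 ℓ))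
        (Dstep p.1 k') (Dstep p.2 k') := by
      unfold PCond
      simp only
      rw [hAa, hBb]
      exact ⟨fun ℓ => rfl, rfl, rfl⟩
    rw [Pker, if_pos hcond]
    simp only
    have e1 : m + ((Dstep p.1 k' : ℤ) : ZMod d) + ((∑ ℓ : Fin k', Dstep p.1 ℓ : ℤ) : ZMod d)
        = m + ((p.1 : ℤ) : ZMod d) := by
      rw [add_assoc, ← Int.cast_add, hAa]
    have e2 : n + ((Dstep p.2 k' : ℤ) : ZMod d) + ((∑ ℓ : Fin k', Dstep p.2 ℓ : ℤ) : ZMod d)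
        = n + ((p.2 : ℤ) : ZMod d) := by
      rw [add_assoc, ← Int.cast_add, hBb]
    rw [hAa, hBb, e1, e2]

/-- Recursive decomposition of a (2k+1)×(2k+1) kernel into compositions of 3×3 kernels
applied k-1 times (periodic padding). -/
theorem decomp_recursive {d k : ℕ} (hk : 1 ≤ k) (hd : k < d) (K : ℤ → ℤ → ℝ) :
    ∃ P : (Fin (k - 1) → ℤ × ℤ) → ℤ → ℤ → ℝ,
      (∀ c s t, ((1 : ℤ) < |s| ∨ (1 : ℤ) < |t|) → P c s t = 0) ∧
      ∀ (X : ZMod d → ZMod d → ℝ) (m n : ZMod d),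
        pconv (k : ℤ) K X m n =
          ∑ c ∈ Fintype.piFinset
              (fun _ : Fin (k - 1) => (Finset.Icc (-1 : ℤ) 1) ×ˢ (Finset.Icc (-1 : ℤ) 1)),
            pconv 1 (P c) (applyShifts (List.ofFn c) X) m n := by
  obtain ⟨k', rfl⟩ : ∃ k', k = k' + 1 := ⟨k - 1, by omega⟩
  exact ⟨Pker k' K, fun c s t h => Pker_supp k' K c s t h, fun X m n => Pker_main K X m n⟩
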